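/- For every nonzero x ∈ F^4 and every matrix M ∈ G, π[x·M] = {v·M : v ∈ π[x]}; that is, π([x]·M) = π([x])·M. Consequently, every M ∈ G induces an automorphism of the graph A(q). -/

import Mathlib

open Matrix

noncomputable section

abbrev F (n : ℕ) : Type := GaloisField 2 (2 * n + 1)

def om (n : ℕ) : ℕ := 2 ^ (n + 1)

def ff (n : ℕ) (x y : F n) : F n := x ^ (om n + 2) + x * y + y ^ om n

def Mmat (n : ℕ) (r a b : F n) : Matrix (Fin 4) (Fin 4) (F n) :=
  !![1, ff n a b, a, b;
     0, r ^ (om n + 2), 0, 0;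
     0, (a ^ (om n + 1) + b) * r, r, a ^ om n * r;
     0, a * r ^ (om n + 1), 0, r ^ (om n + 1)]

/-- The four spanning vectors of the polar line `π[x]`. -/
def polarGens (n : ℕ) (x : Fin 4 → F n) : Set (Fin 4 → F n) :=
  {![0, (x 0 * x 1 + x 2 * x 3) ^ 2 ^ n, x 0 ^ om n, x 2 ^ om n],
   ![(x 0 * x 1 + x 2 * x 3) ^ 2 ^ n, 0, x 3 ^ om n, x 1 ^ om n],
   ![x 0 ^ om n, x 3 ^ om n, 0, (x 0 * x 1 + x 2 * x 3) ^ 2 ^ n],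
   ![x 2 ^ om n, x 1 ^ om n, (x 0 * x 1 + x 2 * x 3) ^ 2 ^ n, 0]}

/-- The polar line `π[x]`, as a subspace of `F⁴`. -/
def polarSpan (n : ℕ) (x : Fin 4 → F n) : Submodule (F n) (Fin 4 → F n) :=
  Submodule.span (F n) (polarGens n x)

/-- The point set of `PG(3,q)`. -/
abbrev PG3 (n : ℕ) : Type := Projectivization (F n) (Fin 4 → F n)

/-- The graph `A(q)`: projective points of `PG(3,q)`, with `[x]` adjacent to `[y]`
iff `[x] ≠ [y]` and `y ∈ π[x]` (equivalently, `x ∈ π[y]`, the relation being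
symmetric).  Membership `y ∈ π[x]` does not depend on the choice of
representatives, so it is tested on the canonical representatives. -/
def Aq (n : ℕ) : SimpleGraph (PG3 n) where
  Adj P Q := P ≠ Q ∧ Q.rep ∈ polarSpan n P.rep ∧ P.rep ∈ polarSpan n Q.rep
  symm := ⟨fun _ _ h => ⟨h.1.symm, h.2.2, h.2.1⟩⟩
  loopless := ⟨fun _ h => h.1 rfl⟩

/-- A vector with a coordinate equal to `1` is nonzero. -/
lemma vne {n : ℕ} (v : Fin 4 → F n) (i : Fin 4) (h : v i = 1) : v ≠ 0 := by
  intro h0; rw [h0] at h; simp at h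

/-! ### Scalar lemmas -/

lemma powq (n : ℕ) (u : F n) : u ^ (2 ^ (2*n+1)) = u := by
  have : Fintype (F n) := Fintype.ofFinite _
  have := FiniteField.pow_card u
  rwa [← Nat.card_eq_fintype_card, GaloisField.card 2 (2*n+1) (by omega)] at this

lemma psadd (n : ℕ) (u v : F n) : (u + v) ^ om n = u ^ om n + v ^ om n := by
  rw [om]; exact add_pow_char_pow u v 2 (n+1)

lemma phadd (n : ℕ) (u v : F n) : (u + v) ^ 2 ^ n = u ^ 2 ^ n + v ^ 2 ^ n :=
  add_pow_char_pow u v 2 n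

lemma psph (n : ℕ) (u : F n) : (u ^ om n) ^ 2 ^ n = u := by
  rw [← pow_mul, om, ← pow_add, show n+1+n = 2*n+1 by omega]; exact powq n u

lemma psps (n : ℕ) (u : F n) : (u ^ om n) ^ om n = u ^ 2 := by
  rw [← pow_mul, om, ← pow_add, show n+1+(n+1) = (2*n+1)+1 by omega, pow_succ, pow_mul, powq]

lemma phsq (n : ℕ) (u : F n) : (u ^ 2) ^ 2 ^ n = u ^ om n := by
  rw [← pow_mul, om, show 2 * 2^n = 2^(n+1) by rw [pow_succ]; omega]

/-! ### Coordinates of `x ᵥ* M` -/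

lemma vecMul_M (n : ℕ) (r a b : F n) (x : Fin 4 → F n) :
    x ᵥ* Mmat n r a b = ![x 0,
      x 0*(a^om n*(a*a) + a*b + b^om n) + x 1*(r^om n*(r*r)) + x 2*((a^om n*a + b)*r)
        + x 3*(a*(r^om n*r)),
      x 0*a + x 2*r,
      x 0*b + x 2*(a^om n*r) + x 3*(r^om n*r)] := by
  have h0 : (x ᵥ* Mmat n r a b) 0 = x 0 := by
    simp [Mmat, ff, Matrix.vecMul, dotProduct, Fin.sum_univ_four, Matrix.vecHead,
      Matrix.vecTail]
  have h1 : (x ᵥ* Mmat n r a b) 1 = x 0*(a^om n*(a*a) + a*b + b^om n) + x 1*(r^om n*(r*r))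
      + x 2*((a^om n*a + b)*r) + x 3*(a*(r^om n*r)) := by
    simp [Mmat, ff, Matrix.vecMul, dotProduct, Fin.sum_univ_four, Matrix.vecHead,
      Matrix.vecTail]
    ring
  have h2 : (x ᵥ* Mmat n r a b) 2 = x 0*a + x 2*r := by
    simp [Mmat, ff, Matrix.vecMul, dotProduct, Fin.sum_univ_four, Matrix.vecHead,
      Matrix.vecTail]
  have h3 : (x ᵥ* Mmat n r a b) 3 = x 0*b + x 2*(a^om n*r) + x 3*(r^om n*r) := by
    simp [Mmat, ff, Matrix.vecMul, dotProduct, Fin.sum_univ_four, Matrix.vecHead,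
      Matrix.vecTail]
    exact Or.inl (pow_succ r (om n))
  funext i
  fin_cases i
  · exact h0
  · exact h1
  · exact h2
  · exact h3


lemma two_eq_zero (n : ℕ) : (2 : F n) = 0 := by
  have : ((2:ℕ) : F n) = 0 := CharP.cast_eq_zero (F n) 2
  exact_mod_cast this

set_option maxHeartbeats 1000000 in
lemma polar_map (n : ℕ) {r : F n} (hr : r ≠ 0) (a b : F n) (x : Fin 4 → F n) :
    polarSpan n (x ᵥ* Mmat n r a b) =
      Submodule.map (Mmat n r a b).vecMulLinear (polarSpan n x) := by
  have key : ∀ c : F n,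
      (c*((r^om n)*r^2) + ((x 0)^2*((a^om n)*a^2 + (b^om n)) + (x 2)^2*((a^om n)*r^2)))^2^n
        = (r^om n)*r*c^2^n + (x 0^om n)*((a^om n)*a + b) + (x 2^om n)*(a*(r^om n)) := by
    intro c
    simp only [phadd, mul_pow, psph, phsq]
    ring
  have hc' : ((x 0)*((x 0)*((a^om n)*(a*a) + a*b + (b^om n)) + (x 1)*((r^om n)*(r*r)) + (x 2)*(((a^om n)*a + b)*r) + (x 3)*(a*((r^om n)*r))) + ((x 0)*a + (x 2)*r)*((x 0)*b + (x 2)*((a^om n)*r) + (x 3)*((r^om n)*r))) ^ 2 ^ n = (r^om n)*r*((x 0 * x 1 + x 2 * x 3) ^ 2 ^ n) + (x 0^om n)*((a^om n)*a + b) + (x 2^om n)*(a*(r^om n)) := by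
    rw [show (x 0)*((x 0)*((a^om n)*(a*a) + a*b + (b^om n)) + (x 1)*((r^om n)*(r*r)) + (x 2)*(((a^om n)*a + b)*r) + (x 3)*(a*((r^om n)*r))) + ((x 0)*a + (x 2)*r)*((x 0)*b + (x 2)*((a^om n)*r) + (x 3)*((r^om n)*r))
        = ((x 0)*(x 1) + (x 2)*(x 3))*((r^om n)*r^2) + ((x 0)^2*((a^om n)*a^2 + (b^om n)) + (x 2)^2*((a^om n)*r^2)) from by linear_combination ((x 0)*(x 3)*a*r*(r^om n) + (x 0)*(x 2)*b*r + (x 0)*(x 2)*a*r*(a^om n) + (x 0)^2*a*b) * two_eq_zero n]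
    exact key _
  have hE1 : ((x 0)*((a^om n)*(a*a) + a*b + (b^om n)) + (x 1)*((r^om n)*(r*r)) + (x 2)*(((a^om n)*a + b)*r) + (x 3)*(a*((r^om n)*r))) ^ om n = (x 0^om n)*((a^om n)*(a^om n)*a^2 + (a^om n)*(b^om n) + b^2) + (x 1^om n)*((r^om n)*(r^om n)*r^2) + (x 2^om n)*(((a^om n)*a^2 + (b^om n))*(r^om n)) + (x 3^om n)*((a^om n)*((r^om n)*r^2)) := by
    simp only [psadd, mul_pow, psps]
    all_goals ring
  have hE2 : ((x 0)*a + (x 2)*r) ^ om n = (x 0^om n)*(a^om n) + (x 2^om n)*(r^om n) := by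
    simp only [psadd, mul_pow, psps]
    all_goals ring
  have hE3 : ((x 0)*b + (x 2)*((a^om n)*r) + (x 3)*((r^om n)*r)) ^ om n = (x 0^om n)*(b^om n) + (x 2^om n)*(a^2*(r^om n)) + (x 3^om n)*(r^2*(r^om n)) := by
    simp only [psadd, mul_pow, psps]
    all_goals ring
  have hPG : polarGens n (x ᵥ* Mmat n r a b) = {![0, (r^om n)*r*((x 0 * x 1 + x 2 * x 3) ^ 2 ^ n) + (x 0^om n)*((a^om n)*a + b) + (x 2^om n)*(a*(r^om n)), (x 0^om n), (x 0^om n)*(a^om n) + (x 2^om n)*(r^om n)], ![(r^om n)*r*((x 0 * x 1 + x 2 * x 3) ^ 2 ^ n) + (x 0^om n)*((a^om n)*a + b) + (x 2^om n)*(a*(r^om n)), 0, (x 0^om n)*(b^om n) + (x 2^om n)*(a^2*(r^om n)) + (x 3^om n)*(r^2*(r^om n)), (x 0^om n)*((a^om n)*(a^om n)*a^2 + (a^om n)*(b^om n) + b^2) + (x 1^om n)*((r^om n)*(r^om n)*r^2) + (x 2^om n)*(((a^om n)*a^2 + (b^om n))*(r^om n)) + (x 3^om n)*((a^om n)*((r^om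 n)*r^2))], ![(x 0^om n), (x 0^om n)*(b^om n) + (x 2^om n)*(a^2*(r^om n)) + (x 3^om n)*(r^2*(r^om n)), 0, (r^om n)*r*((x 0 * x 1 + x 2 * x 3) ^ 2 ^ n) + (x 0^om n)*((a^om n)*a + b) + (x 2^om n)*(a*(r^om n))], ![(x 0^om n)*(a^om n) + (x 2^om n)*(r^om n), (x 0^om n)*((a^om n)*(a^om n)*a^2 + (a^om n)*(b^om n) + b^2) + (x 1^om n)*((r^om n)*(r^om n)*r^2) + (x 2^om n)*(((a^om n)*a^2 + (b^om n))*(r^om n)) + (x 3^om n)*((a^om n)*((r^om n)*r^2)), (r^om n)*r*((x 0 * x 1 + x 2 * x 3) ^ 2 ^ n) + (x 0^om n)*((a^om n)*a + b) + (x 2^om n)*(a*(r^om n)), 0]} := by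
    rw [vecMul_M]
    simp only [polarGens, Matrix.cons_val_zero, Matrix.cons_val_one, Matrix.head_cons,
      Matrix.cons_val_two, Matrix.tail_cons, Matrix.cons_val_three]
    rw [hc', hE1, hE2, hE3]

  have p0 : 0 = r*0 := by
    ring
  have p1 : 0*((a^om n)*(a*a) + a*b + (b^om n)) + ((x 0 * x 1 + x 2 * x 3) ^ 2 ^ n)*((r^om n)*(r*r)) + (x 0^om n)*(((a^om n)*a + b)*r) + (x 2^om n)*(a*((r^om n)*r)) = r*((r^om n)*r*((x 0 * x 1 + x 2 * x 3) ^ 2 ^ n) + (x 0^om n)*((a^om n)*a + b) + (x 2^om n)*(a*(r^om n))) := by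
    ring
  have p2 : 0*a + (x 0^om n)*r = r*(x 0^om n) := by
    ring
  have p3 : 0*b + (x 0^om n)*((a^om n)*r) + (x 2^om n)*((r^om n)*r) = r*((x 0^om n)*(a^om n) + (x 2^om n)*(r^om n)) := by
    ring

  have hI0 : (![0, ((x 0 * x 1 + x 2 * x 3) ^ 2 ^ n), (x 0^om n), (x 2^om n)]) ᵥ* Mmat n r a b = r • (![0, (r^om n)*r*((x 0 * x 1 + x 2 * x 3) ^ 2 ^ n) + (x 0^om n)*((a^om n)*a + b) + (x 2^om n)*(a*(r^om n)), (x 0^om n), (x 0^om n)*(a^om n) + (x 2^om n)*(r^om n)]) := by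
    rw [vecMul_M]; funext i; fin_cases i
    · exact p0
    · exact p1
    · exact p2
    · exact p3

  have q0 : (x 0^om n) = (x 0^om n) + a*0 := by
    ring
  have q1 : (x 0^om n)*((a^om n)*(a*a) + a*b + (b^om n)) + (x 3^om n)*((r^om n)*(r*r)) + 0*(((a^om n)*a + b)*r) + ((x 0 * x 1 + x 2 * x 3) ^ 2 ^ n)*(a*((r^om n)*r)) = (x 0^om n)*(b^om n) + (x 2^om n)*(a^2*(r^om n)) + (x 3^om n)*(r^2*(r^om n)) + a*((r^om n)*r*((x 0 * x 1 + x 2 * x 3) ^ 2 ^ n) + (x 0^om n)*((a^om n)*a + b) + (x 2^om n)*(a*(r^om n))) := by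
    linear_combination (-a^2*(r^om n)*(x 2^om n)) * two_eq_zero n
  have q2 : (x 0^om n)*a + 0*r = 0 + a*(x 0^om n) := by
    ring
  have q3 : (x 0^om n)*b + 0*((a^om n)*r) + ((x 0 * x 1 + x 2 * x 3) ^ 2 ^ n)*((r^om n)*r) = (r^om n)*r*((x 0 * x 1 + x 2 * x 3) ^ 2 ^ n) + (x 0^om n)*((a^om n)*a + b) + (x 2^om n)*(a*(r^om n)) + a*((x 0^om n)*(a^om n) + (x 2^om n)*(r^om n)) := by
    linear_combination (-a*(r^om n)*(x 2^om n) - a*(a^om n)*(x 0^om n)) * two_eq_zero n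

  have hI2 : (![(x 0^om n), (x 3^om n), 0, ((x 0 * x 1 + x 2 * x 3) ^ 2 ^ n)]) ᵥ* Mmat n r a b = (![(x 0^om n), (x 0^om n)*(b^om n) + (x 2^om n)*(a^2*(r^om n)) + (x 3^om n)*(r^2*(r^om n)), 0, (r^om n)*r*((x 0 * x 1 + x 2 * x 3) ^ 2 ^ n) + (x 0^om n)*((a^om n)*a + b) + (x 2^om n)*(a*(r^om n))]) + a • (![0, (r^om n)*r*((x 0 * x 1 + x 2 * x 3) ^ 2 ^ n) + (x 0^om n)*((a^om n)*a + b) + (x 2^om n)*(a*(r^om n)), (x 0^om n), (x 0^om n)*(a^om n) + (x 2^om n)*(r^om n)]) := by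
    rw [vecMul_M]; funext i; fin_cases i
    · exact q0
    · exact q1
    · exact q2
    · exact q3

  have s0 : (r^om n)*(x 2^om n) = ((a^om n)*a + b)*0 + (a^om n)*(x 0^om n) + ((x 0^om n)*(a^om n) + (x 2^om n)*(r^om n)) := by
    linear_combination (-(a^om n)*(x 0^om n)) * two_eq_zero n
  have s1 : (r^om n)*((x 2^om n)*((a^om n)*(a*a) + a*b + (b^om n)) + (x 1^om n)*((r^om n)*(r*r)) + ((x 0 * x 1 + x 2 * x 3) ^ 2 ^ n)*(((a^om n)*a + b)*r) + 0*(a*((r^om n)*r))) = ((a^om n)*a + b)*((r^om n)*r*((x 0 * x 1 + x 2 * x 3) ^ 2 ^ n) + (x 0^om n)*((a^om n)*a + b) + (x 2^om n)*(a*(r^om n))) + (a^om n)*((x 0^om n)*(b^om n) + (x 2^om n)*(a^2*(r^om n)) + (x 3^om n)*(r^2*(r^om n))) + ((x 0^om n)*((a^om n)*(a^om n)*a^2 + (a^om n)*(b^om n) + b^2) + (x 1^om n)*((r^om n)*(r^om n)*r^2) + (x 2^om n)*(((a^om n)*a^2 + (b^om n))*(r^om n)) + (x 3^om n)*((a^om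 n)*((r^om n)*r^2))) := by
    linear_combination (-(a^om n)*(b^om n)*(x 0^om n) - r^2*(a^om n)*(r^om n)*(x 3^om n) - b^2*(x 0^om n) - a*b*(a^om n)*(x 0^om n) - a^2*(a^om n)*(r^om n)*(x 2^om n) - a^2*(a^om n)^2*(x 0^om n)) * two_eq_zero n
  have s2 : (r^om n)*((x 2^om n)*a + ((x 0 * x 1 + x 2 * x 3) ^ 2 ^ n)*r) = ((a^om n)*a + b)*(x 0^om n) + (a^om n)*0 + ((r^om n)*r*((x 0 * x 1 + x 2 * x 3) ^ 2 ^ n) + (x 0^om n)*((a^om n)*a + b) + (x 2^om n)*(a*(r^om n))) := by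
    linear_combination (-b*(x 0^om n) - a*(a^om n)*(x 0^om n)) * two_eq_zero n
  have s3 : (r^om n)*((x 2^om n)*b + ((x 0 * x 1 + x 2 * x 3) ^ 2 ^ n)*((a^om n)*r) + 0*((r^om n)*r)) = ((a^om n)*a + b)*((x 0^om n)*(a^om n) + (x 2^om n)*(r^om n)) + (a^om n)*((r^om n)*r*((x 0 * x 1 + x 2 * x 3) ^ 2 ^ n) + (x 0^om n)*((a^om n)*a + b) + (x 2^om n)*(a*(r^om n))) + 0 := by
    linear_combination (-b*(a^om n)*(x 0^om n) - a*(a^om n)*(r^om n)*(x 2^om n) - a*(a^om n)^2*(x 0^om n)) * two_eq_zero n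

  have hI3 : r^om n • ((![(x 2^om n), (x 1^om n), ((x 0 * x 1 + x 2 * x 3) ^ 2 ^ n), 0]) ᵥ* Mmat n r a b)
      = ((a^om n)*a + b) • (![0, (r^om n)*r*((x 0 * x 1 + x 2 * x 3) ^ 2 ^ n) + (x 0^om n)*((a^om n)*a + b) + (x 2^om n)*(a*(r^om n)), (x 0^om n), (x 0^om n)*(a^om n) + (x 2^om n)*(r^om n)]) + (a^om n) • (![(x 0^om n), (x 0^om n)*(b^om n) + (x 2^om n)*(a^2*(r^om n)) + (x 3^om n)*(r^2*(r^om n)), 0, (r^om n)*r*((x 0 * x 1 + x 2 * x 3) ^ 2 ^ n) + (x 0^om n)*((a^om n)*a + b) + (x 2^om n)*(a*(r^om n))]) + (![(x 0^om n)*(a^om n) + (x 2^om n)*(r^om n), (x 0^om n)*((a^om n)*(a^om n)*a^2 + (a^om n)*(b^om n) + b^2) + (x 1^om n)*((r^om n)*(r^om n)*r^2) + (x 2^om n)*(((a^om n)*a^2 + (b^om n))*(r^om n)) + (x 3^om n)*((a^om n)*((r^om n)*r^2)), (r^om n)*r*((x 0 * x 1 + x 2 * x 3) ^ 2 ^ n)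 + (x 0^om n)*((a^om n)*a + b) + (x 2^om n)*(a*(r^om n)), 0]) := by
    rw [vecMul_M]; funext i; fin_cases i
    · exact s0
    · exact s1
    · exact s2
    · exact s3

  have t0 : (r^om n)*r*((x 0 * x 1 + x 2 * x 3) ^ 2 ^ n) = (r^om n)*r*((x 0 * x 1 + x 2 * x 3) ^ 2 ^ n) + (x 0^om n)*((a^om n)*a + b) + (x 2^om n)*(a*(r^om n)) + ((a^om n)*(a*a) + a*b + (b^om n))*0 + b*(x 0^om n) + a*((x 0^om n)*(a^om n) + (x 2^om n)*(r^om n)) := by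
    linear_combination (-b*(x 0^om n) - a*(r^om n)*(x 2^om n) - a*(a^om n)*(x 0^om n)) * two_eq_zero n
  have t1 : (r^om n)*r*(((x 0 * x 1 + x 2 * x 3) ^ 2 ^ n)*((a^om n)*(a*a) + a*b + (b^om n)) + 0*((r^om n)*(r*r)) + (x 3^om n)*(((a^om n)*a + b)*r) + (x 1^om n)*(a*((r^om n)*r))) = 0 + ((a^om n)*(a*a) + a*b + (b^om n))*((r^om n)*r*((x 0 * x 1 + x 2 * x 3) ^ 2 ^ n) + (x 0^om n)*((a^om n)*a + b) + (x 2^om n)*(a*(r^om n))) + b*((x 0^om n)*(b^om n) + (x 2^om n)*(a^2*(r^om n)) + (x 3^om n)*(r^2*(r^om n))) + a*((x 0^om n)*((a^om n)*(a^om n)*a^2 + (a^om n)*(b^om n) + b^2) + (x 1^om n)*((r^om n)*(r^om n)*r^2) + (x 2^om n)*(((a^om n)*a^2 + (b^om n))*(r^om n)) + (x 3^om n)*((a^om n)*((r^om n)*r^2))) := by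
    linear_combination (-b*(b^om n)*(x 0^om n) - a*(b^om n)*(r^om n)*(x 2^om n) - a*(a^om n)*(b^om n)*(x 0^om n) - a*b^2*(x 0^om n) - a^2*b*(r^om n)*(x 2^om n) - a^2*b*(a^om n)*(x 0^om n) - a^3*(a^om n)*(r^om n)*(x 2^om n) - a^3*(a^om n)^2*(x 0^om n)) * two_eq_zero n
  have t2 : (r^om n)*r*(((x 0 * x 1 + x 2 * x 3) ^ 2 ^ n)*a + (x 3^om n)*r) = (x 0^om n)*(b^om n) + (x 2^om n)*(a^2*(r^om n)) + (x 3^om n)*(r^2*(r^om n)) + ((a^om n)*(a*a) + a*b + (b^om n))*(x 0^om n) + b*0 + a*((r^om n)*r*((x 0 * x 1 + x 2 * x 3) ^ 2 ^ n) + (x 0^om n)*((a^om n)*a + b) + (x 2^om n)*(a*(r^om n))) := by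
    linear_combination (-(b^om n)*(x 0^om n) - a*b*(x 0^om n) - a^2*(r^om n)*(x 2^om n) - a^2*(a^om n)*(x 0^om n)) * two_eq_zero n
  have t3 : (r^om n)*r*(((x 0 * x 1 + x 2 * x 3) ^ 2 ^ n)*b + (x 3^om n)*((a^om n)*r) + (x 1^om n)*((r^om n)*r)) = (x 0^om n)*((a^om n)*(a^om n)*a^2 + (a^om n)*(b^om n) + b^2) + (x 1^om n)*((r^om n)*(r^om n)*r^2) + (x 2^om n)*(((a^om n)*a^2 + (b^om n))*(r^om n)) + (x 3^om n)*((a^om n)*((r^om n)*r^2)) + ((a^om n)*(a*a) + a*b + (b^om n))*((x 0^om n)*(a^om n) + (x 2^om n)*(r^om n)) + b*((r^om n)*r*((x 0 * x 1 + x 2 * x 3) ^ 2 ^ n) + (x 0^om n)*((a^om n)*a + b) + (x 2^om n)*(a*(r^om n))) + a*0 := by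
    linear_combination (-(b^om n)*(r^om n)*(x 2^om n) - (a^om n)*(b^om n)*(x 0^om n) - b^2*(x 0^om n) - a*b*(r^om n)*(x 2^om n) - a*b*(a^om n)*(x 0^om n) - a^2*(a^om n)*(r^om n)*(x 2^om n) - a^2*(a^om n)^2*(x 0^om n)) * two_eq_zero n

  have hI1 : ((r^om n)*r) • ((![((x 0 * x 1 + x 2 * x 3) ^ 2 ^ n), 0, (x 3^om n), (x 1^om n)]) ᵥ* Mmat n r a b)
      = (![(r^om n)*r*((x 0 * x 1 + x 2 * x 3) ^ 2 ^ n) + (x 0^om n)*((a^om n)*a + b) + (x 2^om n)*(a*(r^om n)), 0, (x 0^om n)*(b^om n) + (x 2^om n)*(a^2*(r^om n)) + (x 3^om n)*(r^2*(r^om n)), (x 0^om n)*((a^om n)*(a^om n)*a^2 + (a^om n)*(b^om n) + b^2) + (x 1^om n)*((r^om n)*(r^om n)*r^2) + (x 2^om n)*(((a^om n)*a^2 + (b^om n))*(r^om n)) + (x 3^om n)*((a^om n)*((r^om n)*r^2))]) + ((a^om n)*(a*a) + a*b + (b^om n)) • (![0, (r^om n)*r*((x 0 * x 1 + x 2 *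 x 3) ^ 2 ^ n) + (x 0^om n)*((a^om n)*a + b) + (x 2^om n)*(a*(r^om n)), (x 0^om n), (x 0^om n)*(a^om n) + (x 2^om n)*(r^om n)]) + b • (![(x 0^om n), (x 0^om n)*(b^om n) + (x 2^om n)*(a^2*(r^om n)) + (x 3^om n)*(r^2*(r^om n)), 0, (r^om n)*r*((x 0 * x 1 + x 2 * x 3) ^ 2 ^ n) + (x 0^om n)*((a^om n)*a + b) + (x 2^om n)*(a*(r^om n))]) + a • (![(x 0^om n)*(a^om n) + (x 2^om n)*(r^om n), (x 0^om n)*((a^om n)*(a^om n)*a^2 + (a^om n)*(b^om n) + b^2) + (x 1^om n)*((r^om n)*(r^om n)*r^2) + (x 2^om n)*(((a^om n)*a^2 + (b^om n))*(r^om n)) + (x 3^om n)*((a^om n)*((r^om n)*r^2)), (r^om n)*r*((x 0 * x 1 + x 2 * x 3) ^ 2 ^ n) + (x 0^om n)*((a^om n)*a + b) + (x 2^om n)*(a*(r^om n)), 0]) := by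
    rw [vecMul_M]; funext i; fin_cases i
    · exact t0
    · exact t1
    · exact t2
    · exact t3

  rw [polarSpan, polarSpan, hPG,
    show polarGens n x = {![0, ((x 0 * x 1 + x 2 * x 3) ^ 2 ^ n), (x 0^om n), (x 2^om n)], ![((x 0 * x 1 + x 2 * x 3) ^ 2 ^ n), 0, (x 3^om n), (x 1^om n)], ![(x 0^om n), (x 3^om n), 0, ((x 0 * x 1 + x 2 * x 3) ^ 2 ^ n)], ![(x 2^om n), (x 1^om n), ((x 0 * x 1 + x 2 * x 3) ^ 2 ^ n), 0]} from rfl,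
    Submodule.map_span, Set.image_insert_eq, Set.image_insert_eq, Set.image_insert_eq,
    Set.image_singleton]
  simp only [Matrix.vecMulLinear_apply]
  apply Submodule.span_eq_span
  · have m0 : (![0, ((x 0 * x 1 + x 2 * x 3) ^ 2 ^ n), (x 0^om n), (x 2^om n)]) ᵥ* Mmat n r a b ∈ Submodule.span (F n) {(![0, ((x 0 * x 1 + x 2 * x 3) ^ 2 ^ n), (x 0^om n), (x 2^om n)]) ᵥ* Mmat n r a b, (![((x 0 * x 1 + x 2 * x 3) ^ 2 ^ n), 0, (x 3^om n), (x 1^om n)]) ᵥ* Mmat n r a b, (![(x 0^om n), (x 3^om n), 0, ((x 0 * x 1 + x 2 * x 3) ^ 2 ^ n)]) ᵥ* Mmat n r a b, (![(x 2^om n), (x 1^om n), ((x 0 * x 1 + x 2 * x 3) ^ 2 ^ n), 0]) ᵥ* Mmat n r a b} := Submodule.subset_span (by simp)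
    have m1 : (![((x 0 * x 1 + x 2 * x 3) ^ 2 ^ n), 0, (x 3^om n), (x 1^om n)]) ᵥ* Mmat n r a b ∈ Submodule.span (F n) {(![0, ((x 0 * x 1 + x 2 * x 3) ^ 2 ^ n), (x 0^om n), (x 2^om n)]) ᵥ* Mmat n r a b, (![((x 0 * x 1 + x 2 * x 3) ^ 2 ^ n), 0, (x 3^om n), (x 1^om n)]) ᵥ* Mmat n r a b, (![(x 0^om n), (x 3^om n), 0, ((x 0 * x 1 + x 2 * x 3) ^ 2 ^ n)]) ᵥ* Mmat n r a b, (![(x 2^om n), (x 1^om n), ((x 0 * x 1 + x 2 * x 3) ^ 2 ^ n), 0]) ᵥ* Mmat n r a b} := Submodule.subset_span (by simp)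
    have m2 : (![(x 0^om n), (x 3^om n), 0, ((x 0 * x 1 + x 2 * x 3) ^ 2 ^ n)]) ᵥ* Mmat n r a b ∈ Submodule.span (F n) {(![0, ((x 0 * x 1 + x 2 * x 3) ^ 2 ^ n), (x 0^om n), (x 2^om n)]) ᵥ* Mmat n r a b, (![((x 0 * x 1 + x 2 * x 3) ^ 2 ^ n), 0, (x 3^om n), (x 1^om n)]) ᵥ* Mmat n r a b, (![(x 0^om n), (x 3^om n), 0, ((x 0 * x 1 + x 2 * x 3) ^ 2 ^ n)]) ᵥ* Mmat n r a b, (![(x 2^om n), (x 1^om n), ((x 0 * x 1 + x 2 * x 3) ^ 2 ^ n), 0]) ᵥ* Mmat n r a b} := Submodule.subset_span (by simp)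
    have m3 : (![(x 2^om n), (x 1^om n), ((x 0 * x 1 + x 2 * x 3) ^ 2 ^ n), 0]) ᵥ* Mmat n r a b ∈ Submodule.span (F n) {(![0, ((x 0 * x 1 + x 2 * x 3) ^ 2 ^ n), (x 0^om n), (x 2^om n)]) ᵥ* Mmat n r a b, (![((x 0 * x 1 + x 2 * x 3) ^ 2 ^ n), 0, (x 3^om n), (x 1^om n)]) ᵥ* Mmat n r a b, (![(x 0^om n), (x 3^om n), 0, ((x 0 * x 1 + x 2 * x 3) ^ 2 ^ n)]) ᵥ* Mmat n r a b, (![(x 2^om n), (x 1^om n), ((x 0 * x 1 + x 2 * x 3) ^ 2 ^ n), 0]) ᵥ* Mmat n r a b} := Submodule.subset_span (by simp)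
    have hG0m : (![0, (r^om n)*r*((x 0 * x 1 + x 2 * x 3) ^ 2 ^ n) + (x 0^om n)*((a^om n)*a + b) + (x 2^om n)*(a*(r^om n)), (x 0^om n), (x 0^om n)*(a^om n) + (x 2^om n)*(r^om n)]) ∈ Submodule.span (F n) {(![0, ((x 0 * x 1 + x 2 * x 3) ^ 2 ^ n), (x 0^om n), (x 2^om n)]) ᵥ* Mmat n r a b, (![((x 0 * x 1 + x 2 * x 3) ^ 2 ^ n), 0, (x 3^om n), (x 1^om n)]) ᵥ* Mmat n r a b, (![(x 0^om n), (x 3^om n), 0, ((x 0 * x 1 + x 2 * x 3) ^ 2 ^ n)]) ᵥ* Mmat n r a b, (![(x 2^om n), (x 1^om n), ((x 0 * x 1 + x 2 * x 3) ^ 2 ^ n), 0]) ᵥ* Mmat n r a b} := by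
      have h : (![0, (r^om n)*r*((x 0 * x 1 + x 2 * x 3) ^ 2 ^ n) + (x 0^om n)*((a^om n)*a + b) + (x 2^om n)*(a*(r^om n)), (x 0^om n), (x 0^om n)*(a^om n) + (x 2^om n)*(r^om n)]) = r⁻¹ • ((![0, ((x 0 * x 1 + x 2 * x 3) ^ 2 ^ n), (x 0^om n), (x 2^om n)]) ᵥ* Mmat n r a b) := by
        rw [hI0, smul_smul, inv_mul_cancel₀ hr, one_smul]
      rw [h]; exact Submodule.smul_mem _ _ m0
    have hG2m : (![(x 0^om n), (x 0^om n)*(b^om n) + (x 2^om n)*(a^2*(r^om n)) + (x 3^om n)*(r^2*(r^om n)), 0, (r^om n)*r*((x 0 * x 1 + x 2 * x 3) ^ 2 ^ n) + (x 0^om n)*((a^om n)*a + b) + (x 2^om n)*(a*(r^om n))]) ∈ Submodule.span (F n) {(![0, ((x 0 * x 1 + x 2 * x 3) ^ 2 ^ n), (x 0^om n), (x 2^om n)]) ᵥ* Mmat n r a b, (![((x 0 * x 1 + x 2 * x 3) ^ 2 ^ n), 0, (x 3^om n), (x 1^om n)]) ᵥ* Mmat n r a b, (![(x 0^om n), (x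 3^om n), 0, ((x 0 * x 1 + x 2 * x 3) ^ 2 ^ n)]) ᵥ* Mmat n r a b, (![(x 2^om n), (x 1^om n), ((x 0 * x 1 + x 2 * x 3) ^ 2 ^ n), 0]) ᵥ* Mmat n r a b} := by
      have h : (![(x 0^om n), (x 0^om n)*(b^om n) + (x 2^om n)*(a^2*(r^om n)) + (x 3^om n)*(r^2*(r^om n)), 0, (r^om n)*r*((x 0 * x 1 + x 2 * x 3) ^ 2 ^ n) + (x 0^om n)*((a^om n)*a + b) + (x 2^om n)*(a*(r^om n))]) = ((![(x 0^om n), (x 3^om n), 0, ((x 0 * x 1 + x 2 * x 3) ^ 2 ^ n)]) ᵥ* Mmat n r a b) - a • (![0, (r^om n)*r*((x 0 * x 1 + x 2 * x 3) ^ 2 ^ n) + (x 0^om n)*((a^om n)*a + b) + (x 2^om n)*(a*(r^om n)), (x 0^om n), (x 0^om n)*(a^om n) + (x 2^om n)*(r^om n)]) := by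
        rw [hI2, add_sub_cancel_right]
      rw [h]; exact Submodule.sub_mem _ m2 (Submodule.smul_mem _ _ hG0m)
    have hG3m : (![(x 0^om n)*(a^om n) + (x 2^om n)*(r^om n), (x 0^om n)*((a^om n)*(a^om n)*a^2 + (a^om n)*(b^om n) + b^2) + (x 1^om n)*((r^om n)*(r^om n)*r^2) + (x 2^om n)*(((a^om n)*a^2 + (b^om n))*(r^om n)) + (x 3^om n)*((a^om n)*((r^om n)*r^2)), (r^om n)*r*((x 0 * x 1 + x 2 * x 3) ^ 2 ^ n) + (x 0^om n)*((a^om n)*a + b) + (x 2^om n)*(a*(r^om n)), 0]) ∈ Submodule.span (F n) {(![0, ((x 0 * x 1 + x 2 * x 3) ^ 2 ^ n), (x 0^om n), (x 2^om n)]) ᵥ* Mmat n r a b, (![((x 0 * x 1 + x 2 * x 3) ^ 2 ^ n), 0, (x 3^om n), (x 1^om n)]) ᵥ* Mmat n r a b, (![(x 0^om n), (x 3^om n), 0, ((x 0 * x 1 + x 2 * x 3) ^ 2 ^ n)]) ᵥ* Mmat n r a b, (![(x 2^om n), (x 1^om n), ((x 0 * x 1 + x 2 * x 3) ^ 2 ^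 n), 0]) ᵥ* Mmat n r a b} := by
      have h : (![(x 0^om n)*(a^om n) + (x 2^om n)*(r^om n), (x 0^om n)*((a^om n)*(a^om n)*a^2 + (a^om n)*(b^om n) + b^2) + (x 1^om n)*((r^om n)*(r^om n)*r^2) + (x 2^om n)*(((a^om n)*a^2 + (b^om n))*(r^om n)) + (x 3^om n)*((a^om n)*((r^om n)*r^2)), (r^om n)*r*((x 0 * x 1 + x 2 * x 3) ^ 2 ^ n) + (x 0^om n)*((a^om n)*a + b) + (x 2^om n)*(a*(r^om n)), 0]) = r^om n • ((![(x 2^om n), (x 1^om n), ((x 0 * x 1 + x 2 * x 3) ^ 2 ^ n), 0]) ᵥ* Mmat n r a b)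
          - (((a^om n)*a + b) • (![0, (r^om n)*r*((x 0 * x 1 + x 2 * x 3) ^ 2 ^ n) + (x 0^om n)*((a^om n)*a + b) + (x 2^om n)*(a*(r^om n)), (x 0^om n), (x 0^om n)*(a^om n) + (x 2^om n)*(r^om n)]) + (a^om n) • (![(x 0^om n), (x 0^om n)*(b^om n) + (x 2^om n)*(a^2*(r^om n)) + (x 3^om n)*(r^2*(r^om n)), 0, (r^om n)*r*((x 0 * x 1 + x 2 * x 3) ^ 2 ^ n) + (x 0^om n)*((a^om n)*a + b) + (x 2^om n)*(a*(r^om n))])) := by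
        rw [hI3]; abel
      rw [h]
      exact Submodule.sub_mem _ (Submodule.smul_mem _ _ m3)
        (Submodule.add_mem _ (Submodule.smul_mem _ _ hG0m) (Submodule.smul_mem _ _ hG2m))
    have hG1m : (![(r^om n)*r*((x 0 * x 1 + x 2 * x 3) ^ 2 ^ n) + (x 0^om n)*((a^om n)*a + b) + (x 2^om n)*(a*(r^om n)), 0, (x 0^om n)*(b^om n) + (x 2^om n)*(a^2*(r^om n)) + (x 3^om n)*(r^2*(r^om n)), (x 0^om n)*((a^om n)*(a^om n)*a^2 + (a^om n)*(b^om n) + b^2) + (x 1^om n)*((r^om n)*(r^om n)*r^2) + (x 2^om n)*(((a^om n)*a^2 + (b^om n))*(r^om n)) + (x 3^om n)*((a^om n)*((r^om n)*r^2))]) ∈ Submodule.span (F n) {(![0, ((x 0 * x 1 + x 2 * x 3) ^ 2 ^ n), (x 0^om n), (x 2^om n)]) ᵥ* Mmat n r a b, (![((x 0 * x 1 + x 2 * x 3) ^ 2 ^ n), 0, (x 3^om n), (x 1^om n)]) ᵥ* Mmat n r a b, (![(x 0^om n), (x 3^om n), 0, ((x 0 * x 1 + x 2 * x 3) ^ 2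 ^ n)]) ᵥ* Mmat n r a b, (![(x 2^om n), (x 1^om n), ((x 0 * x 1 + x 2 * x 3) ^ 2 ^ n), 0]) ᵥ* Mmat n r a b} := by
      have h : (![(r^om n)*r*((x 0 * x 1 + x 2 * x 3) ^ 2 ^ n) + (x 0^om n)*((a^om n)*a + b) + (x 2^om n)*(a*(r^om n)), 0, (x 0^om n)*(b^om n) + (x 2^om n)*(a^2*(r^om n)) + (x 3^om n)*(r^2*(r^om n)), (x 0^om n)*((a^om n)*(a^om n)*a^2 + (a^om n)*(b^om n) + b^2) + (x 1^om n)*((r^om n)*(r^om n)*r^2) + (x 2^om n)*(((a^om n)*a^2 + (b^om n))*(r^om n)) + (x 3^om n)*((a^om n)*((r^om n)*r^2))]) = ((r^om n)*r) • ((![((x 0 * x 1 + x 2 * x 3) ^ 2 ^ n), 0, (x 3^om n), (x 1^om n)]) ᵥ* Mmat n r a b)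
          - (((a^om n)*(a*a) + a*b + (b^om n)) • (![0, (r^om n)*r*((x 0 * x 1 + x 2 * x 3) ^ 2 ^ n) + (x 0^om n)*((a^om n)*a + b) + (x 2^om n)*(a*(r^om n)), (x 0^om n), (x 0^om n)*(a^om n) + (x 2^om n)*(r^om n)]) + b • (![(x 0^om n), (x 0^om n)*(b^om n) + (x 2^om n)*(a^2*(r^om n)) + (x 3^om n)*(r^2*(r^om n)), 0, (r^om n)*r*((x 0 * x 1 + x 2 * x 3) ^ 2 ^ n) + (x 0^om n)*((a^om n)*a + b) + (x 2^om n)*(a*(r^om n))]) + a • (![(x 0^om n)*(a^om n) + (x 2^om n)*(r^om n), (x 0^om n)*((a^om n)*(a^om n)*a^2 + (a^om n)*(b^om n) + b^2) + (x 1^om n)*((r^om n)*(r^om n)*r^2) + (x 2^om n)*(((a^om n)*a^2 + (b^om n))*(r^om n)) + (x 3^om n)*((a^om n)*((r^om n)*r^2)), (r^om n)*r*((x 0 * x 1 + x 2 * x 3) ^ 2 ^ n) + (x 0^om n)*((a^om n)*a + b) + (x 2^om n)*(a*(r^om n)), 0])) := by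
        rw [hI1]; abel
      rw [h]
      exact Submodule.sub_mem _ (Submodule.smul_mem _ _ m1)
        (Submodule.add_mem _ (Submodule.add_mem _ (Submodule.smul_mem _ _ hG0m)
          (Submodule.smul_mem _ _ hG2m)) (Submodule.smul_mem _ _ hG3m))
    intro u hu
    simp only [Set.mem_insert_iff, Set.mem_singleton_iff] at hu
    rcases hu with rfl | rfl | rfl | rfl
    · exact hG0m
    · exact hG1m
    · exact hG2m
    · exact hG3m
  · have n0 : (![0, (r^om n)*r*((x 0 * x 1 + x 2 * x 3) ^ 2 ^ n) + (x 0^om n)*((a^om n)*a + b) + (x 2^om n)*(a*(r^om n)), (x 0^om n), (x 0^om n)*(a^om n) + (x 2^om n)*(r^om n)]) ∈ Submodule.span (F n) {![0, (r^om n)*r*((x 0 * x 1 + x 2 * x 3) ^ 2 ^ n) + (x 0^om n)*((a^om n)*a + b) + (x 2^om n)*(a*(r^om n)), (x 0^om n), (x 0^om n)*(a^om n) + (x 2^om n)*(r^om n)], ![(r^om n)*r*((x 0 * x 1 + x 2 * x 3) ^ 2 ^ n) + (x 0^om n)*((a^om n)*a + b) + (x 2^om n)*(a*(r^om n)), 0,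 (x 0^om n)*(b^om n) + (x 2^om n)*(a^2*(r^om n)) + (x 3^om n)*(r^2*(r^om n)), (x 0^om n)*((a^om n)*(a^om n)*a^2 + (a^om n)*(b^om n) + b^2) + (x 1^om n)*((r^om n)*(r^om n)*r^2) + (x 2^om n)*(((a^om n)*a^2 + (b^om n))*(r^om n)) + (x 3^om n)*((a^om n)*((r^om n)*r^2))], ![(x 0^om n), (x 0^om n)*(b^om n) + (x 2^om n)*(a^2*(r^om n)) + (x 3^om n)*(r^2*(r^om n)), 0, (r^om n)*r*((x 0 * x 1 + x 2 * x 3) ^ 2 ^ n) + (x 0^om n)*((a^om n)*a + b) + (x 2^om n)*(a*(r^om n))], ![(x 0^om n)*(a^om n) + (x 2^om n)*(r^om n), (x 0^om n)*((a^om n)*(a^om n)*a^2 + (a^om n)*(b^om n) + b^2) + (x 1^om n)*((r^om n)*(r^om n)*r^2) + (x 2^om n)*(((a^om n)*a^2 + (b^om n))*(r^om n)) + (x 3^om n)*((a^om n)*((r^om n)*r^2)), (r^om n)*r*((x 0 * x 1 + x 2 * x 3) ^ 2 ^ n) + (x 0^om n)*((a^om n)*a + b) + (x 2^om n)*(a*(r^om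 n)), 0]} := Submodule.subset_span (by simp)
    have n1 : (![(r^om n)*r*((x 0 * x 1 + x 2 * x 3) ^ 2 ^ n) + (x 0^om n)*((a^om n)*a + b) + (x 2^om n)*(a*(r^om n)), 0, (x 0^om n)*(b^om n) + (x 2^om n)*(a^2*(r^om n)) + (x 3^om n)*(r^2*(r^om n)), (x 0^om n)*((a^om n)*(a^om n)*a^2 + (a^om n)*(b^om n) + b^2) + (x 1^om n)*((r^om n)*(r^om n)*r^2) + (x 2^om n)*(((a^om n)*a^2 + (b^om n))*(r^om n)) + (x 3^om n)*((a^om n)*((r^om n)*r^2))]) ∈ Submodule.span (F n) {![0, (r^om n)*r*((x 0 * x 1 + x 2 * x 3) ^ 2 ^ n) + (x 0^om n)*((a^om n)*a + b) + (x 2^om n)*(a*(r^om n)), (x 0^om n), (x 0^om n)*(a^om n) + (x 2^om n)*(r^om n)], ![(r^om n)*r*((x 0 * x 1 + x 2 * x 3) ^ 2 ^ n) + (x 0^om n)*((a^om n)*a + b) + (x 2^om n)*(a*(r^om n)), 0, (x 0^om n)*(b^om n) + (x 2^om n)*(a^2*(r^om n)) + (x 3^om n)*(r^2*(r^om n)),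 (x 0^om n)*((a^om n)*(a^om n)*a^2 + (a^om n)*(b^om n) + b^2) + (x 1^om n)*((r^om n)*(r^om n)*r^2) + (x 2^om n)*(((a^om n)*a^2 + (b^om n))*(r^om n)) + (x 3^om n)*((a^om n)*((r^om n)*r^2))], ![(x 0^om n), (x 0^om n)*(b^om n) + (x 2^om n)*(a^2*(r^om n)) + (x 3^om n)*(r^2*(r^om n)), 0, (r^om n)*r*((x 0 * x 1 + x 2 * x 3) ^ 2 ^ n) + (x 0^om n)*((a^om n)*a + b) + (x 2^om n)*(a*(r^om n))], ![(x 0^om n)*(a^om n) + (x 2^om n)*(r^om n), (x 0^om n)*((a^om n)*(a^om n)*a^2 + (a^om n)*(b^om n) + b^2) + (x 1^om n)*((r^om n)*(r^om n)*r^2) + (x 2^om n)*(((a^om n)*a^2 + (b^om n))*(r^om n)) + (x 3^om n)*((a^om n)*((r^om n)*r^2)), (r^om n)*r*((x 0 * x 1 + x 2 * x 3) ^ 2 ^ n) + (x 0^om n)*((a^om n)*a + b) + (x 2^om n)*(a*(r^om n)), 0]} := Submodule.subset_span (by simp)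
    have n2 : (![(x 0^om n), (x 0^om n)*(b^om n) + (x 2^om n)*(a^2*(r^om n)) + (x 3^om n)*(r^2*(r^om n)), 0, (r^om n)*r*((x 0 * x 1 + x 2 * x 3) ^ 2 ^ n) + (x 0^om n)*((a^om n)*a + b) + (x 2^om n)*(a*(r^om n))]) ∈ Submodule.span (F n) {![0, (r^om n)*r*((x 0 * x 1 + x 2 * x 3) ^ 2 ^ n) + (x 0^om n)*((a^om n)*a + b) + (x 2^om n)*(a*(r^om n)), (x 0^om n), (x 0^om n)*(a^om n) + (x 2^om n)*(r^om n)], ![(r^om n)*r*((x 0 * x 1 + x 2 * x 3) ^ 2 ^ n) + (x 0^om n)*((a^om n)*a + b) + (x 2^om n)*(a*(r^om n)), 0, (x 0^om n)*(b^om n) + (x 2^om n)*(a^2*(r^om n)) + (x 3^om n)*(r^2*(r^om n)), (x 0^om n)*((a^om n)*(a^om n)*a^2 + (a^om n)*(b^om n) + b^2) + (x 1^om n)*((r^om n)*(r^om n)*r^2) + (x 2^om n)*(((a^om n)*a^2 + (b^om n))*(r^om n)) + (x 3^om n)*((a^om n)*((r^om n)*r^2))], ![(x 0^om n), (x 0^om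 n)*(b^om n) + (x 2^om n)*(a^2*(r^om n)) + (x 3^om n)*(r^2*(r^om n)), 0, (r^om n)*r*((x 0 * x 1 + x 2 * x 3) ^ 2 ^ n) + (x 0^om n)*((a^om n)*a + b) + (x 2^om n)*(a*(r^om n))], ![(x 0^om n)*(a^om n) + (x 2^om n)*(r^om n), (x 0^om n)*((a^om n)*(a^om n)*a^2 + (a^om n)*(b^om n) + b^2) + (x 1^om n)*((r^om n)*(r^om n)*r^2) + (x 2^om n)*(((a^om n)*a^2 + (b^om n))*(r^om n)) + (x 3^om n)*((a^om n)*((r^om n)*r^2)), (r^om n)*r*((x 0 * x 1 + x 2 * x 3) ^ 2 ^ n) + (x 0^om n)*((a^om n)*a + b) + (x 2^om n)*(a*(r^om n)), 0]} := Submodule.subset_span (by simp)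
    have n3 : (![(x 0^om n)*(a^om n) + (x 2^om n)*(r^om n), (x 0^om n)*((a^om n)*(a^om n)*a^2 + (a^om n)*(b^om n) + b^2) + (x 1^om n)*((r^om n)*(r^om n)*r^2) + (x 2^om n)*(((a^om n)*a^2 + (b^om n))*(r^om n)) + (x 3^om n)*((a^om n)*((r^om n)*r^2)), (r^om n)*r*((x 0 * x 1 + x 2 * x 3) ^ 2 ^ n) + (x 0^om n)*((a^om n)*a + b) + (x 2^om n)*(a*(r^om n)), 0]) ∈ Submodule.span (F n) {![0, (r^om n)*r*((x 0 * x 1 + x 2 * x 3) ^ 2 ^ n) + (x 0^om n)*((a^om n)*a + b) + (x 2^om n)*(a*(r^om n)), (x 0^om n), (x 0^om n)*(a^om n) + (x 2^om n)*(r^om n)], ![(r^om n)*r*((x 0 * x 1 + x 2 * x 3) ^ 2 ^ n) + (x 0^om n)*((a^om n)*a + b) + (x 2^om n)*(a*(r^om n)), 0, (x 0^om n)*(b^om n) + (x 2^om n)*(a^2*(r^om n)) + (x 3^om n)*(r^2*(r^om n)), (x 0^om n)*((a^om n)*(a^om n)*a^2 + (a^om n)*(b^om n) + b^2) + (x 1^om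 n)*((r^om n)*(r^om n)*r^2) + (x 2^om n)*(((a^om n)*a^2 + (b^om n))*(r^om n)) + (x 3^om n)*((a^om n)*((r^om n)*r^2))], ![(x 0^om n), (x 0^om n)*(b^om n) + (x 2^om n)*(a^2*(r^om n)) + (x 3^om n)*(r^2*(r^om n)), 0, (r^om n)*r*((x 0 * x 1 + x 2 * x 3) ^ 2 ^ n) + (x 0^om n)*((a^om n)*a + b) + (x 2^om n)*(a*(r^om n))], ![(x 0^om n)*(a^om n) + (x 2^om n)*(r^om n), (x 0^om n)*((a^om n)*(a^om n)*a^2 + (a^om n)*(b^om n) + b^2) + (x 1^om n)*((r^om n)*(r^om n)*r^2) + (x 2^om n)*(((a^om n)*a^2 + (b^om n))*(r^om n)) + (x 3^om n)*((a^om n)*((r^om n)*r^2)), (r^om n)*r*((x 0 * x 1 + x 2 * x 3) ^ 2 ^ n) + (x 0^om n)*((a^om n)*a + b) + (x 2^om n)*(a*(r^om n)), 0]} := Submodule.subset_span (by simp)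
    intro u hu
    simp only [Set.mem_insert_iff, Set.mem_singleton_iff] at hu
    rcases hu with rfl | rfl | rfl | rfl
    · rw [hI0]; exact Submodule.smul_mem _ _ n0
    · have h : (![((x 0 * x 1 + x 2 * x 3) ^ 2 ^ n), 0, (x 3^om n), (x 1^om n)]) ᵥ* Mmat n r a b = ((r^om n)*r)⁻¹ • ((![(r^om n)*r*((x 0 * x 1 + x 2 * x 3) ^ 2 ^ n) + (x 0^om n)*((a^om n)*a + b) + (x 2^om n)*(a*(r^om n)), 0, (x 0^om n)*(b^om n) + (x 2^om n)*(a^2*(r^om n)) + (x 3^om n)*(r^2*(r^om n)), (x 0^om n)*((a^om n)*(a^om n)*a^2 + (a^om n)*(b^om n) + b^2) + (x 1^om n)*((r^om n)*(r^om n)*r^2) + (x 2^om n)*(((a^om n)*a^2 + (b^om n))*(r^om n)) + (x 3^om n)*((a^om n)*((r^om n)*r^2))]) + ((a^om n)*(a*a) + a*b + (b^om n)) • (![0, (r^om n)*r*((x 0 * x 1 + x 2 * x 3) ^ 2 ^ n) + (x 0^om n)*((a^om n)*a + b) + (x 2^om n)*(a*(r^om n)), (x 0^om n), (x 0^om n)*(a^om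 n) + (x 2^om n)*(r^om n)])
          + b • (![(x 0^om n), (x 0^om n)*(b^om n) + (x 2^om n)*(a^2*(r^om n)) + (x 3^om n)*(r^2*(r^om n)), 0, (r^om n)*r*((x 0 * x 1 + x 2 * x 3) ^ 2 ^ n) + (x 0^om n)*((a^om n)*a + b) + (x 2^om n)*(a*(r^om n))]) + a • (![(x 0^om n)*(a^om n) + (x 2^om n)*(r^om n), (x 0^om n)*((a^om n)*(a^om n)*a^2 + (a^om n)*(b^om n) + b^2) + (x 1^om n)*((r^om n)*(r^om n)*r^2) + (x 2^om n)*(((a^om n)*a^2 + (b^om n))*(r^om n)) + (x 3^om n)*((a^om n)*((r^om n)*r^2)), (r^om n)*r*((x 0 * x 1 + x 2 * x 3) ^ 2 ^ n) + (x 0^om n)*((a^om n)*a + b) + (x 2^om n)*(a*(r^om n)), 0])) := by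
        rw [← hI1, smul_smul, inv_mul_cancel₀ (mul_ne_zero (pow_ne_zero _ hr) hr), one_smul]
      rw [h]
      exact Submodule.smul_mem _ _ (Submodule.add_mem _ (Submodule.add_mem _
        (Submodule.add_mem _ n1 (Submodule.smul_mem _ _ n0)) (Submodule.smul_mem _ _ n2))
        (Submodule.smul_mem _ _ n3))
    · rw [hI2]; exact Submodule.add_mem _ n2 (Submodule.smul_mem _ _ n0)
    · have h : (![(x 2^om n), (x 1^om n), ((x 0 * x 1 + x 2 * x 3) ^ 2 ^ n), 0]) ᵥ* Mmat n r a b = (r^om n)⁻¹ • (((a^om n)*a + b) • (![0, (r^om n)*r*((x 0 * x 1 + x 2 * x 3) ^ 2 ^ n) + (x 0^om n)*((a^om n)*a + b) + (x 2^om n)*(a*(r^om n)), (x 0^om n), (x 0^om n)*(a^om n) + (x 2^om n)*(r^om n)])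
          + (a^om n) • (![(x 0^om n), (x 0^om n)*(b^om n) + (x 2^om n)*(a^2*(r^om n)) + (x 3^om n)*(r^2*(r^om n)), 0, (r^om n)*r*((x 0 * x 1 + x 2 * x 3) ^ 2 ^ n) + (x 0^om n)*((a^om n)*a + b) + (x 2^om n)*(a*(r^om n))]) + (![(x 0^om n)*(a^om n) + (x 2^om n)*(r^om n), (x 0^om n)*((a^om n)*(a^om n)*a^2 + (a^om n)*(b^om n) + b^2) + (x 1^om n)*((r^om n)*(r^om n)*r^2) + (x 2^om n)*(((a^om n)*a^2 + (b^om n))*(r^om n)) + (x 3^om n)*((a^om n)*((r^om n)*r^2)), (r^om n)*r*((x 0 * x 1 + x 2 * x 3) ^ 2 ^ n) + (x 0^om n)*((a^om n)*a + b) + (x 2^om n)*(a*(r^om n)), 0])) := by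
        rw [← hI3, smul_smul, inv_mul_cancel₀ (pow_ne_zero _ hr), one_smul]
      rw [h]
      exact Submodule.smul_mem _ _ (Submodule.add_mem _ (Submodule.add_mem _
        (Submodule.smul_mem _ _ n0) (Submodule.smul_mem _ _ n2)) n3)

/-! ### Scaling invariance of the polar span -/

lemma polarSpan_smul (n : ℕ) {t : F n} (ht : t ≠ 0) (x : Fin 4 → F n) :
    polarSpan n (t • x) = polarSpan n x := by
  have hXs : ∀ u : F n, (t*u)^om n = t^om n * u^om n := fun u => mul_pow t u (om n)
  have hCs : ((t * x 0)*(t * x 1) + (t * x 2)*(t * x 3))^2^n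
      = t^om n * ((x 0*x 1 + x 2*x 3)^2^n) := by
    rw [show (t * x 0)*(t * x 1) + (t * x 2)*(t * x 3) = t^2*(x 0*x 1 + x 2*x 3) from by ring,
      mul_pow, phsq]
  have hz : (0:F n) = t^om n * 0 := by ring
  have k0 : ![0, ((t•x) 0*(t•x) 1 + (t•x) 2*(t•x) 3)^2^n, (t•x) 0^om n, (t•x) 2^om n]
      = t^om n • ![0, (x 0*x 1+x 2*x 3)^2^n, x 0^om n, x 2^om n] := by
    funext i
    fin_cases i <;>
      simp only [Pi.smul_apply, smul_eq_mul, Matrix.cons_val_zero, Matrix.cons_val_one,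
        Matrix.head_cons, Matrix.cons_val_two, Matrix.tail_cons, Matrix.cons_val_three]
    · exact hz
    · exact hCs
    · exact hXs _
    · exact hXs _
  have k1 : ![((t•x) 0*(t•x) 1 + (t•x) 2*(t•x) 3)^2^n, 0, (t•x) 3^om n, (t•x) 1^om n]
      = t^om n • ![(x 0*x 1+x 2*x 3)^2^n, 0, x 3^om n, x 1^om n] := by
    funext i
    fin_cases i <;>
      simp only [Pi.smul_apply, smul_eq_mul, Matrix.cons_val_zero, Matrix.cons_val_one,
        Matrix.head_cons, Matrix.cons_val_two, Matrix.tail_cons, Matrix.cons_val_three]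
    · exact hCs
    · exact hz
    · exact hXs _
    · exact hXs _
  have k2 : ![(t•x) 0^om n, (t•x) 3^om n, 0, ((t•x) 0*(t•x) 1 + (t•x) 2*(t•x) 3)^2^n]
      = t^om n • ![x 0^om n, x 3^om n, 0, (x 0*x 1+x 2*x 3)^2^n] := by
    funext i
    fin_cases i <;>
      simp only [Pi.smul_apply, smul_eq_mul, Matrix.cons_val_zero, Matrix.cons_val_one,
        Matrix.head_cons, Matrix.cons_val_two, Matrix.tail_cons, Matrix.cons_val_three]
    · exact hXs _
    · exact hXs _
    · exact hz
    · exact hCs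
  have k3 : ![(t•x) 2^om n, (t•x) 1^om n, ((t•x) 0*(t•x) 1 + (t•x) 2*(t•x) 3)^2^n, 0]
      = t^om n • ![x 2^om n, x 1^om n, (x 0*x 1+x 2*x 3)^2^n, 0] := by
    funext i
    fin_cases i <;>
      simp only [Pi.smul_apply, smul_eq_mul, Matrix.cons_val_zero, Matrix.cons_val_one,
        Matrix.head_cons, Matrix.cons_val_two, Matrix.tail_cons, Matrix.cons_val_three]
    · exact hXs _
    · exact hXs _
    · exact hCs
    · exact hz
  rw [polarSpan, polarSpan]
  apply Submodule.span_eq_span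
  · intro u hu
    simp only [polarGens, Set.mem_insert_iff, Set.mem_singleton_iff] at hu
    rcases hu with rfl | rfl | rfl | rfl
    · rw [k0]
      exact Submodule.smul_mem _ _ (Submodule.subset_span (by simp [polarGens]))
    · rw [k1]
      exact Submodule.smul_mem _ _ (Submodule.subset_span (by simp [polarGens]))
    · rw [k2]
      exact Submodule.smul_mem _ _ (Submodule.subset_span (by simp [polarGens]))
    · rw [k3]
      exact Submodule.smul_mem _ _ (Submodule.subset_span (by simp [polarGens]))
  · intro u hu
    simp only [polarGens, Set.mem_insert_iff, Set.mem_singleton_iff] at hu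
    have hne := pow_ne_zero (om n) ht
    rcases hu with rfl | rfl | rfl | rfl
    · have h : ![(0:F n), (x 0*x 1+x 2*x 3)^2^n, x 0^om n, x 2^om n]
          = (t^om n)⁻¹ • ![0, ((t•x) 0*(t•x) 1 + (t•x) 2*(t•x) 3)^2^n, (t•x) 0^om n, (t•x) 2^om n] := by
        rw [k0, smul_smul, inv_mul_cancel₀ hne, one_smul]
      rw [h]
      exact Submodule.smul_mem _ _ (Submodule.subset_span (by simp [polarGens]))
    · have h : ![(x 0*x 1+x 2*x 3)^2^n, (0:F n), x 3^om n, x 1^om n]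
          = (t^om n)⁻¹ • ![((t•x) 0*(t•x) 1 + (t•x) 2*(t•x) 3)^2^n, 0, (t•x) 3^om n, (t•x) 1^om n] := by
        rw [k1, smul_smul, inv_mul_cancel₀ hne, one_smul]
      rw [h]
      exact Submodule.smul_mem _ _ (Submodule.subset_span (by simp [polarGens]))
    · have h : ![x 0^om n, x 3^om n, (0:F n), (x 0*x 1+x 2*x 3)^2^n]
          = (t^om n)⁻¹ • ![(t•x) 0^om n, (t•x) 3^om n, 0, ((t•x) 0*(t•x) 1 + (t•x) 2*(t•x) 3)^2^n] := by
        rw [k2, smul_smul, inv_mul_cancel₀ hne, one_smul]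
      rw [h]
      exact Submodule.smul_mem _ _ (Submodule.subset_span (by simp [polarGens]))
    · have h : ![x 2^om n, x 1^om n, (x 0*x 1+x 2*x 3)^2^n, (0:F n)]
          = (t^om n)⁻¹ • ![(t•x) 2^om n, (t•x) 1^om n, ((t•x) 0*(t•x) 1 + (t•x) 2*(t•x) 3)^2^n, 0] := by
        rw [k3, smul_smul, inv_mul_cancel₀ hne, one_smul]
      rw [h]
      exact Submodule.smul_mem _ _ (Submodule.subset_span (by simp [polarGens]))

/-! ### Injectivity of the action -/

lemma vecMul_eq_zero (n : ℕ) {r : F n} (hr : r ≠ 0) (a b : F n) (v : Fin 4 → F n)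
    (hv : v ᵥ* Mmat n r a b = 0) : v = 0 := by
  rw [vecMul_M] at hv
  have h0 := congrFun hv 0
  have h1 := congrFun hv 1
  have h2 := congrFun hv 2
  have h3 := congrFun hv 3
  simp only [Matrix.cons_val_zero, Matrix.cons_val_one, Matrix.head_cons, Matrix.cons_val_two,
    Matrix.tail_cons, Matrix.cons_val_three, Pi.zero_apply] at h0 h1 h2 h3
  have e2 : v 2 = 0 := by
    rw [h0, zero_mul, zero_add] at h2
    rcases mul_eq_zero.mp h2 with h | h
    · exact h
    · exact absurd h hr
  have e3 : v 3 = 0 := by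
    rw [h0, e2, zero_mul, zero_mul, zero_add, zero_add] at h3
    rcases mul_eq_zero.mp h3 with h | h
    · exact h
    · exact absurd h (mul_ne_zero (pow_ne_zero _ hr) hr)
  have e1 : v 1 = 0 := by
    rw [h0, e2, e3, zero_mul, zero_mul, zero_mul, zero_add, add_zero, add_zero] at h1
    rcases mul_eq_zero.mp h1 with h | h
    · exact h
    · exact absurd h (mul_ne_zero (pow_ne_zero _ hr) (mul_ne_zero hr hr))
  funext i
  fin_cases i
  · exact h0
  · exact e1
  · exact e2
  · exact e3

lemma vecMulLinear_injective (n : ℕ) {r : F n} (hr : r ≠ 0) (a b : F n) :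
    Function.Injective (Mmat n r a b).vecMulLinear := by
  intro u v huv
  have h : (Mmat n r a b).vecMulLinear (u - v) = 0 := by
    rw [map_sub, huv, sub_self]
  have := vecMul_eq_zero n hr a b (u - v) (by rwa [Matrix.vecMulLinear_apply] at h)
  exact sub_eq_zero.mp this

theorem G_preserves_polarity_and_induces_automorphisms (n : ℕ) (hn : 1 ≤ n) :
    (∀ r : F n, r ≠ 0 → ∀ a b : F n, ∀ x : Fin 4 → F n, x ≠ 0 →
      polarSpan n (x ᵥ* Mmat n r a b) =
        Submodule.map (Mmat n r a b).vecMulLinear (polarSpan n x)) ∧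
    (∀ r : F n, r ≠ 0 → ∀ a b : F n, ∃ φ : Aq n ≃g Aq n,
      ∀ (x : Fin 4 → F n) (hx : x ≠ 0) (hx' : x ᵥ* Mmat n r a b ≠ 0),
        φ (Projectivization.mk (F n) x hx) =
          Projectivization.mk (F n) (x ᵥ* Mmat n r a b) hx') := by
  constructor
  · intro r hr a b x _
    exact polar_map n hr a b x
  · intro r hr a b
    have hinj := vecMulLinear_injective n hr a b
    have hsurj : Function.Surjective (Mmat n r a b).vecMulLinear :=
      Finite.surjective_of_injective hinj
    let e : (Fin 4 → F n) ≃ₗ[F n] (Fin 4 → F n) :=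
      LinearEquiv.ofBijective (Mmat n r a b).vecMulLinear ⟨hinj, hsurj⟩
    have hfne : ∀ v : Fin 4 → F n, v ≠ 0 → v ᵥ* Mmat n r a b ≠ 0 := by
      intro v hv h
      exact hv (vecMul_eq_zero n hr a b v h)
    let φfun : PG3 n → PG3 n := Projectivization.map e.toLinearMap e.injective
    let ψfun : PG3 n → PG3 n := Projectivization.map e.symm.toLinearMap e.symm.injective
    have hleft : ∀ P, ψfun (φfun P) = P := by
      intro P
      induction P using Projectivization.ind with
      | h v hv =>
        show Projectivization.map e.symm.toLinearMap e.symm.injective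
          (Projectivization.map e.toLinearMap e.injective (Projectivization.mk (F n) v hv)) = _
        rw [Projectivization.map_mk, Projectivization.map_mk]
        simp
    have hright : ∀ P, φfun (ψfun P) = P := by
      intro P
      induction P using Projectivization.ind with
      | h v hv =>
        show Projectivization.map e.toLinearMap e.injective
          (Projectivization.map e.symm.toLinearMap e.symm.injective
            (Projectivization.mk (F n) v hv)) = _
        rw [Projectivization.map_mk, Projectivization.map_mk]
        simp
    let equiv : PG3 n ≃ PG3 n := ⟨φfun, ψfun, hleft, hright⟩
    have hrep : ∀ P : PG3 n, ∃ c : (F n)ˣ, (φfun P).rep = (c : F n) • (P.rep ᵥ* Mmat n r a b) := by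
      intro P
      have h1 : φfun P = Projectivization.mk (F n) (P.rep ᵥ* Mmat n r a b)
          (hfne _ P.rep_nonzero) := by
        show Projectivization.map e.toLinearMap e.injective P = _
        conv_lhs => rw [← P.mk_rep]
        rw [Projectivization.map_mk]
        rfl
      obtain ⟨c, hc⟩ := Projectivization.exists_smul_eq_mk_rep (F n)
        (P.rep ᵥ* Mmat n r a b) (hfne _ P.rep_nonzero)
      refine ⟨c, ?_⟩
      rw [h1, ← hc, Units.smul_def]
    have hmem : ∀ u w : Fin 4 → F n,
        (u ᵥ* Mmat n r a b ∈ polarSpan n (w ᵥ* Mmat n r a b) ↔ u ∈ polarSpan n w) := by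
      intro u w
      rw [polar_map n hr a b w]
      constructor
      · intro hm
        rw [Submodule.mem_map] at hm
        obtain ⟨z, hz, hze⟩ := hm
        have : z = u := hinj (by rw [hze]; rfl)
        rwa [← this]
      · intro hm
        exact ⟨u, hm, rfl⟩
    have claim : ∀ P Q : PG3 n,
        ((φfun Q).rep ∈ polarSpan n (φfun P).rep ↔ Q.rep ∈ polarSpan n P.rep) := by
      intro P Q
      obtain ⟨cP, hcP⟩ := hrep P
      obtain ⟨cQ, hcQ⟩ := hrep Q
      rw [hcP, hcQ, polarSpan_smul n (Units.ne_zero cP),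
        Submodule.smul_mem_iff _ (Units.ne_zero cQ)]
      exact hmem _ _
    refine ⟨⟨equiv, ?_⟩, ?_⟩
    · intro P Q
      show (Aq n).Adj (φfun P) (φfun Q) ↔ (Aq n).Adj P Q
      have hne : (φfun P ≠ φfun Q) ↔ (P ≠ Q) := (equiv.apply_eq_iff_eq (x := P) (y := Q)).ne
      exact and_congr hne (and_congr (claim P Q) (claim Q P))
    · intro x hx hx'
      show Projectivization.map e.toLinearMap e.injective (Projectivization.mk (F n) x hx) = _
      rw [Projectivization.map_mk]
      rfl
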